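/- Let M', O', I', B_O, B_I be pairwise disjoint subsets of {1,…,n} whose union is {1,…,n}, let d ∈ ℝⁿ, and assume Q is positive semidefinite. Let F be the set of triples (β̂₀, β̂, ĝ) ∈ ℝ × ℝⁿ × ℝⁿ such that ĝ = Q β̂ + β̂₀ y; ĝ_i ≥ 0 and β̂_i ≥ 0 for all i ∈ B_O; ĝ_i ≤ 0 and β̂_i ≤ d_i for all i ∈ B_I; ĝ_i = 0 for all i ∈ M'; β̂_i = 0 for all i ∈ O'; β̂_i = d_i for all i ∈ I'; and yᵀ β̂ = 0. Define the objective J(β̂₀, β̂, ĝ) = Σ_{i ∈ B_O} ĝ_i β̂_i + Σ_{i ∈ B_I} ĝ_i (β̂_i − d_i). If F is nonempty and (β̂₀*, β̂*, ĝ*) minimizes J over F, then J(β̂₀*, β̂*, ĝ*) = 0; consequently ĝ*_i β̂*_i = 0 for every i ∈ B_O and ĝ*_i (β̂*_i − d_i) = 0 for every i ∈ B_I. -/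

import Mathlib

open Matrix BigOperators Finset

section Farkas
variable {V : Type*} [AddCommGroup V] [Module ℝ V]
variable (p : V →ₗ[ℝ] V →ₗ[ℝ] ℝ)

theorem farkas_fin (hzero : ∀ x, p x x = 0 → x = 0) (hpos : ∀ x, 0 ≤ p x x) :
    ∀ (k : ℕ) (a : Fin k → V) (c : V),
      (∀ x, (∀ i, p (a i) x ≤ 0) → p c x ≤ 0) →
      ∃ l : Fin k → ℝ, (∀ i, 0 ≤ l i) ∧ c = ∑ i, l i • a i := by
  intro k
  induction k with
  | zero =>
      intro a c h
      have h1 : p c c ≤ 0 := h c (fun i => i.elim0)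
      have h2 : c = 0 := hzero c (le_antisymm h1 (hpos c))
      exact ⟨fun i => 0, fun i => le_rfl, by simp [h2]⟩
  | succ k ih =>
      intro a c h
      by_cases H : ∀ x, (∀ i : Fin k, p (a i.castSucc) x ≤ 0) → p c x ≤ 0
      · obtain ⟨l, hl, hc⟩ := ih (fun i => a i.castSucc) c H
        refine ⟨Fin.snoc l 0, ?_, ?_⟩
        · intro i
          refine Fin.lastCases ?_ ?_ i <;> simp [hl]
        · rw [Fin.sum_univ_castSucc]
          simp [hc]
      · push_neg at H
        obtain ⟨xh, hxh, hcxh⟩ := H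
        have hcxh' : 0 < p c xh := hcxh
        have hak : 0 < p (a (Fin.last k)) xh := by
          by_contra hle
          push_neg at hle
          refine absurd (h xh ?_) (not_le.mpr hcxh)
          intro i
          refine Fin.lastCases hle (fun j => hxh j) i
        set ak := a (Fin.last k) with hak_def
        have hakne : p ak xh ≠ 0 := ne_of_gt hak
        -- projected system
        set s : V → ℝ := fun v => p v xh / p ak xh with hs_def
        have key : ∀ (v x : V), p (v - s v • ak) x = p v (x - (p ak x / p ak xh) • xh) := by
          intro v x
          simp only [hs_def, map_sub, _root_.map_smul, LinearMap.sub_apply, LinearMap.smul_apply,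
            smul_eq_mul]
          field_simp
        have Hyp' : ∀ x, (∀ i : Fin k, p (a i.castSucc - s (a i.castSucc) • ak) x ≤ 0) →
            p (c - s c • ak) x ≤ 0 := by
          intro x hx
          rw [key]
          refine h _ ?_
          intro i
          refine Fin.lastCases ?_ ?_ i
          · have : p ak (x - (p ak x / p ak xh) • xh) = 0 := by
              simp only [map_sub, _root_.map_smul, smul_eq_mul]
              field_simp
              ring
            rw [← hak_def, this]
          · intro j
            rw [← key]
            exact hx j
        obtain ⟨l, hl, hc⟩ := ih (fun i => a i.castSucc - s (a i.castSucc) • ak) (c - s c • ak) Hyp'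
        set μ : ℝ := s c - ∑ i : Fin k, l i * s (a i.castSucc) with hμ_def
        have hμ : 0 ≤ μ := by
          have h1 : 0 < s c := div_pos hcxh' hak
          have h2 : ∑ i : Fin k, l i * s (a i.castSucc) ≤ 0 := by
            apply Finset.sum_nonpos
            intro i _
            have : s (a i.castSucc) ≤ 0 := div_nonpos_of_nonpos_of_nonneg (hxh i) (le_of_lt hak)
            exact mul_nonpos_of_nonneg_of_nonpos (hl i) this
          linarith
        refine ⟨Fin.snoc l μ, ?_, ?_⟩
        · intro i
          refine Fin.lastCases ?_ ?_ i <;> simp [hμ, hl]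
        · rw [Fin.sum_univ_castSucc]
          simp only [Fin.snoc_castSucc, Fin.snoc_last]
          have : c = (c - s c • ak) + s c • ak := by abel
          rw [this, hc, hμ_def]
          simp only [smul_sub, Finset.sum_sub_distrib, smul_smul, ← Finset.sum_smul, sub_smul]
          abel
  
end Farkas

section Farkas2
variable {V : Type*} [AddCommGroup V] [Module ℝ V]
variable (p : V →ₗ[ℝ] V →ₗ[ℝ] ℝ)

theorem farkas_fintype (hzero : ∀ x, p x x = 0 → x = 0) (hpos : ∀ x, 0 ≤ p x x)
    {ι : Type*} [Fintype ι] (a : ι → V) (c : V)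
    (h : ∀ x, (∀ j, p (a j) x ≤ 0) → p c x ≤ 0) :
    ∃ l : ι → ℝ, (∀ j, 0 ≤ l j) ∧ c = ∑ j, l j • a j := by
  classical
  obtain ⟨l, hl, hc⟩ := farkas_fin p hzero hpos (Fintype.card ι)
    (fun i => a ((Fintype.equivFin ι).symm i)) c
    (fun x hx => h x (fun j => by simpa using hx ((Fintype.equivFin ι) j)))
  refine ⟨fun j => l ((Fintype.equivFin ι) j), fun j => hl _, ?_⟩
  rw [hc]
  rw [← Equiv.sum_comp (Fintype.equivFin ι) (fun i => l i • a ((Fintype.equivFin ι).symm i))]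
  simp

theorem farkas_affine (hzero : ∀ x, p x x = 0 → x = 0) (hpos : ∀ x, 0 ≤ p x x)
    {ι : Type*} [Fintype ι] (a : ι → V) (β : ι → ℝ) (c : V) (γ : ℝ)
    (x0 : V) (hx0 : ∀ j, p (a j) x0 ≤ β j)
    (h : ∀ x, (∀ j, p (a j) x ≤ β j) → p c x ≤ γ) :
    ∃ l : ι → ℝ, (∀ j, 0 ≤ l j) ∧ c = ∑ j, l j • a j ∧ ∑ j, l j * β j ≤ γ := by
  classical
  obtain ⟨q, hqapp⟩ : ∃ q : (V × ℝ) →ₗ[ℝ] (V × ℝ) →ₗ[ℝ] ℝ,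
      ∀ z w : V × ℝ, q z w = p z.1 w.1 + z.2 * w.2 := by
    refine ⟨LinearMap.mk₂ ℝ (fun z w => p z.1 w.1 + z.2 * w.2)
      (by intro x y z; simp [LinearMap.add_apply]; ring)
      (by intro r x y; simp [_root_.map_smul]; ring)
      (by intro x y z; simp; ring)
      (by intro r x y; simp [_root_.map_smul]; ring), fun z w => rfl⟩
  have hqzero : ∀ z : V × ℝ, q z z = 0 → z = 0 := by
    intro z hz
    rw [hqapp] at hz
    have h1 : z.1 = 0 := hzero _ (le_antisymm (by nlinarith [hpos z.1, mul_self_nonneg z.2]) (hpos z.1))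
    have h2 : z.2 = 0 := by nlinarith [hpos z.1, mul_self_nonneg z.2]
    exact Prod.ext h1 h2
  have hqpos : ∀ z : V × ℝ, 0 ≤ q z z := by
    intro z; rw [hqapp]; nlinarith [hpos z.1, mul_self_nonneg z.2]
  set A : Option ι → V × ℝ := fun j => Option.elim j ((0 : V), (-1 : ℝ)) (fun j => (a j, -β j)) with hA
  have main : ∀ z : V × ℝ, (∀ j, q (A j) z ≤ 0) → q ((c, -γ) : V × ℝ) z ≤ 0 := by
    rintro ⟨x, t⟩ hz
    have ht : 0 ≤ t := by
      have := hz none; rw [hqapp] at this; simp only [hA, Option.elim] at this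
      simp at this; linarith
    have h273 : ∀ j : ι, p (a j) x ≤ β j * t := by
      intro j; have := hz (some j); rw [hqapp] at this; simp only [hA, Option.elim] at this
      simp at this; linarith
    rw [hqapp]; simp only
    rcases eq_or_lt_of_le ht with ht0 | htpos
    · -- t = 0 : recession direction
      have hrec : ∀ j, p (a j) x ≤ 0 := by intro j; have := h273 j; rw [← ht0] at this; linarith
      have hcx : p c x ≤ 0 := by
        by_contra hpcx
        push_neg at hpcx
        set T : ℝ := max 0 ((γ - p c x0 + 1) / p c x) with hT
        have hT0 : 0 ≤ T := le_max_left _ _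
        have hTe : γ - p c x0 + 1 ≤ T * p c x := by
          rcases le_or_gt ((γ - p c x0 + 1) / p c x) 0 with hneg | hpos'
          · have hz2 : T = 0 := by rw [hT]; simp [hneg]
            rw [hz2]; rw [div_nonpos_iff] at hneg
            rcases hneg with ⟨ha1,ha2⟩|⟨ha1,ha2⟩ <;> nlinarith
          · have hz2 : T = (γ - p c x0 + 1) / p c x := by rw [hT]; simp [le_of_lt hpos']
            rw [hz2]; rw [div_mul_cancel₀]; exact ne_of_gt hpcx
        have hfeasT : ∀ j, p (a j) (x0 + T • x) ≤ β j := by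
          intro j
          rw [map_add, _root_.map_smul, smul_eq_mul]
          have := hrec j
          nlinarith [hx0 j]
        have := h _ hfeasT
        rw [map_add, _root_.map_smul, smul_eq_mul] at this
        linarith
      rw [← ht0]; linarith
    · -- t > 0
      have := h (t⁻¹ • x) (by
        intro j
        rw [_root_.map_smul, smul_eq_mul]
        rw [inv_mul_le_iff₀ htpos]
        linarith [h273 j])
      rw [_root_.map_smul, smul_eq_mul] at this
      rw [inv_mul_le_iff₀ htpos] at this
      nlinarith
  obtain ⟨L, hL, hC⟩ := farkas_fintype q hqzero hqpos A ((c, -γ)) main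
  rw [Fintype.sum_option] at hC
  have h1 := congrArg Prod.fst hC
  have h2 := congrArg Prod.snd hC
  simp only [hA, Option.elim, Prod.fst_add, Prod.snd_add, Prod.fst_sum, Prod.snd_sum,
    Prod.smul_fst, Prod.smul_snd, smul_eq_mul, mul_neg, mul_zero, smul_zero] at h1 h2
  refine ⟨fun j => L (some j), fun j => hL _, ?_, ?_⟩
  · rw [h1]; simp
  · have hLn := hL none
    have : ∑ j, L (some j) * β j = γ - L none := by
      have := h2
      push_cast at this
      have hsum : ∑ j : ι, -(L (some j) * β j) = -∑ j : ι, L (some j) * β j := by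
        rw [← Finset.sum_neg_distrib]
      rw [hsum] at this
      linarith
    linarith

end Farkas2


/-- if `0 ≤ t*L + t^2*S` for all small positive `t`, then `0 ≤ L`. -/
lemma nonneg_of_small_t (L S : ℝ) (h : ∀ t : ℝ, 0 < t → t ≤ 1 → 0 ≤ t * L + t ^ 2 * S) :
    0 ≤ L := by
  by_contra hL
  push_neg at hL
  set t : ℝ := min 1 (-L / (2 * |S| + 1)) with ht
  have habs : 0 ≤ |S| := abs_nonneg S
  have hd : 0 < 2 * |S| + 1 := by linarith
  have ht0 : 0 < t := lt_min one_pos (div_pos (by linarith) hd)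
  have ht1 : t ≤ 1 := min_le_left _ _
  have ht2 : t ≤ -L / (2 * |S| + 1) := min_le_right _ _
  have hts : t * |S| ≤ -L / 2 := by
    have h1 : t * |S| ≤ (-L / (2 * |S| + 1)) * |S| := by
      apply mul_le_mul_of_nonneg_right ht2 habs
    have h2 : (-L / (2 * |S| + 1)) * |S| ≤ -L / 2 := by
      rw [div_mul_eq_mul_div, div_le_div_iff₀ hd (by norm_num)]
      nlinarith
    linarith
  have hSS : S ≤ |S| := le_abs_self S
  have := h t ht0 ht1
  nlinarith [mul_pos ht0 ht0]

/-- The feasible set of the QP (10): triples `(β̂₀, β̂, ĝ)` with `ĝ = Q β̂ + β̂₀ y`,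
sign constraints on `B_O` and `B_I`, fixing constraints on `M'`, `O'`, `I'`,
and `yᵀ β̂ = 0`. -/
def FeasQP {n : ℕ} (Q : Matrix (Fin n) (Fin n) ℝ) (y d : Fin n → ℝ)
    (M' O' I' BO BI : Finset (Fin n))
    (b0 : ℝ) (b g : Fin n → ℝ) : Prop :=
  g = Q *ᵥ b + b0 • y ∧
  (∀ i ∈ BO, 0 ≤ g i ∧ 0 ≤ b i) ∧
  (∀ i ∈ BI, g i ≤ 0 ∧ b i ≤ d i) ∧
  (∀ i ∈ M', g i = 0) ∧
  (∀ i ∈ O', b i = 0) ∧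
  (∀ i ∈ I', b i = d i) ∧
  y ⬝ᵥ b = 0

/-- The objective `J(β̂₀, β̂, ĝ) = Σ_{i ∈ B_O} ĝ_i β̂_i + Σ_{i ∈ B_I} ĝ_i (β̂_i − d_i)`. -/
def Jobj {n : ℕ} (d : Fin n → ℝ) (BO BI : Finset (Fin n))
    (b g : Fin n → ℝ) : ℝ :=
  ∑ i ∈ BO, g i * b i + ∑ i ∈ BI, g i * (b i - d i)

set_option maxHeartbeats 2000000 in
/-- Theorem 2: the optimal value of the QP (10) is zero, hence the optimal solution
satisfies the complementarity conditions. -/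
theorem partition_qp_optimal_value_zero
    (n : ℕ) (hn : 0 < n)
    (Q : Matrix (Fin n) (Fin n) ℝ) (hQsym : Q.IsSymm)
    (hQpsd : ∀ v : Fin n → ℝ, 0 ≤ v ⬝ᵥ (Q *ᵥ v))
    (y d : Fin n → ℝ)
    (M' O' I' BO BI : Finset (Fin n))
    (h1 : Disjoint M' O') (h2 : Disjoint M' I') (h3 : Disjoint M' BO) (h4 : Disjoint M' BI)
    (h5 : Disjoint O' I') (h6 : Disjoint O' BO) (h7 : Disjoint O' BI)
    (h8 : Disjoint I' BO) (h9 : Disjoint I' BI) (h10 : Disjoint BO BI)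
    (hcover : M' ∪ O' ∪ I' ∪ BO ∪ BI = Finset.univ)
    (b0s : ℝ) (bs gs : Fin n → ℝ)
    (hfeas : FeasQP Q y d M' O' I' BO BI b0s bs gs)
    (hmin : ∀ (b0 : ℝ) (b g : Fin n → ℝ), FeasQP Q y d M' O' I' BO BI b0 b g →
      Jobj d BO BI bs gs ≤ Jobj d BO BI b g) :
    Jobj d BO BI bs gs = 0 ∧
    (∀ i ∈ BO, gs i * bs i = 0) ∧
    (∀ i ∈ BI, gs i * (bs i - d i) = 0) := by
  classical
  obtain ⟨hg, hBO, hBI, hM, hO, hI, hyb⟩ := hfeas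
  -- the bilinear form on V = ℝ × (Fin n → ℝ)
  obtain ⟨p, hp⟩ : ∃ p : (ℝ × (Fin n → ℝ)) →ₗ[ℝ] (ℝ × (Fin n → ℝ)) →ₗ[ℝ] ℝ,
      ∀ z w, p z w = z.1 * w.1 + z.2 ⬝ᵥ w.2 := by
    refine ⟨LinearMap.mk₂ ℝ (fun z w => z.1 * w.1 + z.2 ⬝ᵥ w.2) ?_ ?_ ?_ ?_, fun z w => rfl⟩
    · intro x y' z; simp [add_dotProduct]; ring
    · intro r x y'; simp [smul_dotProduct]; ring
    · intro x y' z; simp [dotProduct_add]; ring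
    · intro r x y'; simp [dotProduct_smul]; ring
  have hpzero : ∀ z, p z z = 0 → z = 0 := by
    intro z hz
    rw [hp] at hz
    have hd : (0:ℝ) ≤ z.2 ⬝ᵥ z.2 := Finset.sum_nonneg fun i _ => mul_self_nonneg _
    have e1 : z.1 = 0 := by nlinarith [mul_self_nonneg z.1]
    have e2 : z.2 ⬝ᵥ z.2 = 0 := by nlinarith [mul_self_nonneg z.1]
    exact Prod.ext e1 (dotProduct_self_eq_zero.mp e2)
  have hppos : ∀ z, 0 ≤ p z z := by
    intro z; rw [hp]
    have hd : (0:ℝ) ≤ z.2 ⬝ᵥ z.2 := Finset.sum_nonneg fun i _ => mul_self_nonneg _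
    nlinarith [mul_self_nonneg z.1]
  -- abbreviations
  set gB : Fin n → ℝ := fun i => (if i ∈ BO then gs i else 0) + (if i ∈ BI then gs i else 0)
    with hgB
  set bflat : Fin n → ℝ := fun i =>
      (if i ∈ BO then bs i else 0) + (if i ∈ BI then bs i - d i else 0) with hbflat
  set cstar : ℝ × (Fin n → ℝ) := (bflat ⬝ᵥ y, gB + bflat ᵥ* Q) with hcstar
  set zstar : ℝ × (Fin n → ℝ) := (b0s, bs) with hzstar
  -- the constraint system
  set a : (Fin n × Bool) ⊕ (Fin n × Bool) ⊕ Bool → ℝ × (Fin n → ℝ) := fun j =>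
    match j with
    | .inl (i, false) => if i ∈ BO ∪ O' ∪ I' then ((0:ℝ), -Pi.single i 1) else 0
    | .inl (i, true) => if i ∈ BI ∪ O' ∪ I' then ((0:ℝ), Pi.single i 1) else 0
    | .inr (.inl (i, false)) => if i ∈ BO ∪ M' then (-(y i), -(Q i)) else 0
    | .inr (.inl (i, true)) => if i ∈ BI ∪ M' then ((y i), Q i) else 0
    | .inr (.inr false) => ((0:ℝ), y)
    | .inr (.inr true) => ((0:ℝ), -y) with ha
  set β : (Fin n × Bool) ⊕ (Fin n × Bool) ⊕ Bool → ℝ := fun j =>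
    match j with
    | .inl (i, false) => if i ∈ I' then -(d i) else 0
    | .inl (i, true) => if i ∈ BI ∪ O' ∪ I' then (if i ∈ O' then 0 else d i) else 0
    | _ => 0 with hβ
  -- values of the constraints
  have pA1 : ∀ i (z : ℝ × (Fin n → ℝ)), p (a (.inl (i, false))) z
      = if i ∈ BO ∪ O' ∪ I' then -(z.2 i) else 0 := by
    intro i z
    rw [hp]; simp only [ha]
    split_ifs with h <;> simp [single_dotProduct, neg_dotProduct]
  have pA2 : ∀ i (z : ℝ × (Fin n → ℝ)), p (a (.inl (i, true))) z
      = if i ∈ BI ∪ O' ∪ I' then z.2 i else 0 := by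
    intro i z
    rw [hp]; simp only [ha]
    split_ifs with h <;> simp [single_dotProduct]
  have pA3 : ∀ i (z : ℝ × (Fin n → ℝ)), p (a (.inr (.inl (i, false)))) z
      = if i ∈ BO ∪ M' then -(y i * z.1 + Q i ⬝ᵥ z.2) else 0 := by
    intro i z
    rw [hp]; simp only [ha]
    split_ifs with h
    · simp [neg_dotProduct]; ring
    · simp
  have pA4 : ∀ i (z : ℝ × (Fin n → ℝ)), p (a (.inr (.inl (i, true)))) z
      = if i ∈ BI ∪ M' then y i * z.1 + Q i ⬝ᵥ z.2 else 0 := by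
    intro i z
    rw [hp]; simp only [ha]
    split_ifs with h <;> simp
  have pA5 : ∀ (z : ℝ × (Fin n → ℝ)), p (a (.inr (.inr false))) z = y ⬝ᵥ z.2 := by
    intro z; simp [ha, hp]
  have pA6 : ∀ (z : ℝ × (Fin n → ℝ)), p (a (.inr (.inr true))) z = -(y ⬝ᵥ z.2) := by
    intro z; simp [ha, hp, neg_dotProduct]
  -- mulVec coordinates
  have hmv : ∀ (v : Fin n → ℝ) i, (Q *ᵥ v) i = Q i ⬝ᵥ v := fun v i => rfl
  have hgs : ∀ i, gs i = Q i ⬝ᵥ bs + b0s * y i := by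
    intro i; rw [hg]; simp [hmv, mul_comm]
  -- disjointness helpers
  have hd10 : ∀ i, i ∈ BO → i ∉ BI := fun i hi => Finset.disjoint_left.mp h10 hi
  have hd3 : ∀ i, i ∈ BO → i ∉ M' := fun i hi => Finset.disjoint_right.mp h3 hi
  have hd4 : ∀ i, i ∈ BI → i ∉ M' := fun i hi => Finset.disjoint_right.mp h4 hi
  have hd6 : ∀ i, i ∈ BO → i ∉ O' := fun i hi => Finset.disjoint_right.mp h6 hi
  have hd7 : ∀ i, i ∈ BI → i ∉ O' := fun i hi => Finset.disjoint_right.mp h7 hi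
  have hd8 : ∀ i, i ∈ BO → i ∉ I' := fun i hi => Finset.disjoint_right.mp h8 hi
  have hd9 : ∀ i, i ∈ BI → i ∉ I' := fun i hi => Finset.disjoint_right.mp h9 hi
  have hd5 : ∀ i, i ∈ O' → i ∉ I' := fun i hi => Finset.disjoint_left.mp h5 hi
  have hd1 : ∀ i, i ∈ O' → i ∉ M' := fun i hi => Finset.disjoint_right.mp h1 hi
  have hd2 : ∀ i, i ∈ I' → i ∉ M' := fun i hi => Finset.disjoint_right.mp h2 hi
  -- z* satisfies the constraints
  have hsatstar : ∀ j, p (a j) zstar ≤ β j := by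
    rintro (⟨i, _ | _⟩ | ⟨i, _ | _⟩ | _ | _)
    · -- inl (i, false)
      rw [pA1]; simp only [hβ, hzstar]
      by_cases hI' : i ∈ I'
      · rw [if_pos (Finset.mem_union_right _ hI'), if_pos hI', hI i hI']
      · rw [if_neg hI']
        by_cases hmem : i ∈ BO ∪ O' ∪ I'
        · rw [if_pos hmem]
          rcases Finset.mem_union.mp hmem with hmem' | h'
          · rcases Finset.mem_union.mp hmem' with hBO' | hO'
            · simp only [neg_nonpos]  -- -(bs i) ≤ 0
              linarith [(hBO i hBO').2]
            · simp [hO i hO']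
          · exact absurd h' hI'
        · rw [if_neg hmem]
    · -- inl (i, true)
      rw [pA2]; simp only [hβ, hzstar]
      by_cases hmem : i ∈ BI ∪ O' ∪ I'
      · rw [if_pos hmem, if_pos hmem]
        by_cases hO' : i ∈ O'
        · rw [if_pos hO', hO i hO']
        · rw [if_neg hO']
          rcases Finset.mem_union.mp hmem with hmem' | hI'
          · rcases Finset.mem_union.mp hmem' with hBI' | hO''
            · exact (hBI i hBI').2
            · exact absurd hO'' hO'
          · rw [hI i hI']
      · rw [if_neg hmem, if_neg hmem]
    · -- inr inl (i, false)
      rw [pA3]; simp only [hβ, hzstar]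
      split_ifs with hmem
      · have : y i * b0s + Q i ⬝ᵥ bs = gs i := by rw [hgs]; ring
        rw [this]
        rcases Finset.mem_union.mp hmem with hBO' | hM'
        · linarith [(hBO i hBO').1]
        · rw [hM i hM']; norm_num
      · exact le_refl _
    · -- inr inl (i, true)
      rw [pA4]; simp only [hβ, hzstar]
      split_ifs with hmem
      · have : y i * b0s + Q i ⬝ᵥ bs = gs i := by rw [hgs]; ring
        rw [this]
        rcases Finset.mem_union.mp hmem with hBI' | hM'
        · exact (hBI i hBI').1
        · rw [hM i hM']
      · exact le_refl _
    · rw [pA5]; simp only [hβ, hzstar]; rw [hyb]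
    · rw [pA6]; simp only [hβ, hzstar]; rw [hyb]; norm_num
  -- anything satisfying the constraints is feasible
  have hfeas_of_sat : ∀ z : ℝ × (Fin n → ℝ), (∀ j, p (a j) z ≤ β j) →
      FeasQP Q y d M' O' I' BO BI z.1 z.2 (Q *ᵥ z.2 + z.1 • y) := by
    intro z hz
    have hbL : ∀ i, i ∈ BO ∪ O' ∪ I' → -(z.2 i) ≤ (if i ∈ I' then -(d i) else 0) := by
      intro i hmem
      have := hz (.inl (i, false)); rw [pA1, if_pos hmem] at this
      simpa only [hβ] using this
    have hbU : ∀ i, i ∈ BI ∪ O' ∪ I' → z.2 i ≤ (if i ∈ O' then 0 else d i) := by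
      intro i hmem
      have := hz (.inl (i, true)); rw [pA2, if_pos hmem] at this
      simp only [hβ] at this; rwa [if_pos hmem] at this
    have hgL : ∀ i, i ∈ BO ∪ M' → 0 ≤ y i * z.1 + Q i ⬝ᵥ z.2 := by
      intro i hmem
      have := hz (.inr (.inl (i, false))); rw [pA3, if_pos hmem] at this
      simp only [hβ] at this; linarith
    have hgU : ∀ i, i ∈ BI ∪ M' → y i * z.1 + Q i ⬝ᵥ z.2 ≤ 0 := by
      intro i hmem
      have := hz (.inr (.inl (i, true))); rw [pA4, if_pos hmem] at this
      simpa [hβ] using this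
    have hyz : y ⬝ᵥ z.2 = 0 := by
      have hz5 := hz (.inr (.inr false)); rw [pA5] at hz5
      have hz6 := hz (.inr (.inr true)); rw [pA6] at hz6
      simp only [hβ] at hz5 hz6; linarith
    have hGval : ∀ i, (Q *ᵥ z.2 + z.1 • y) i = y i * z.1 + Q i ⬝ᵥ z.2 := by
      intro i; simp [hmv]; ring
    refine ⟨rfl, ?_, ?_, ?_, ?_, ?_, hyz⟩
    · intro i hi
      constructor
      · rw [hGval]; exact hgL i (Finset.mem_union_left _ hi)
      · have := hbL i (Finset.mem_union_left _ (Finset.mem_union_left _ hi))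
        simp [hd8 i hi] at this; linarith
    · intro i hi
      constructor
      · rw [hGval]; exact hgU i (Finset.mem_union_left _ hi)
      · have := hbU i (Finset.mem_union_left _ (Finset.mem_union_left _ hi))
        simpa [hd7 i hi] using this
    · intro i hi
      rw [hGval]
      have hl := hgL i (Finset.mem_union_right _ hi)
      have hu := hgU i (Finset.mem_union_right _ hi)
      linarith
    · intro i hi
      have hL' := hbL i (Finset.mem_union_left _ (Finset.mem_union_right _ hi))
      have hU' := hbU i (Finset.mem_union_left _ (Finset.mem_union_right _ hi))
      simp [hd5 i hi, hi] at hL' hU'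
      linarith
    · intro i hi
      have hL' := hbL i (Finset.mem_union_right _ hi)
      have hU' := hbU i (Finset.mem_union_right _ hi)
      have hiO : i ∉ O' := fun h' => hd5 i h' hi
      simp [hi, hiO] at hL' hU'
      linarith
  -- dot products with the indicator vectors
  have e1 : ∀ v : Fin n → ℝ, gB ⬝ᵥ v = (∑ i ∈ BO, gs i * v i) + ∑ i ∈ BI, gs i * v i := by
    intro v
    simp only [dotProduct, hgB, add_mul, ite_mul, zero_mul]
    rw [Finset.sum_add_distrib, Finset.sum_ite_mem, Finset.sum_ite_mem,
      Finset.univ_inter, Finset.univ_inter]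
  have e2 : ∀ v : Fin n → ℝ, bflat ⬝ᵥ v
      = (∑ i ∈ BO, bs i * v i) + ∑ i ∈ BI, (bs i - d i) * v i := by
    intro v
    simp only [dotProduct, hbflat, add_mul, ite_mul, zero_mul]
    rw [Finset.sum_add_distrib, Finset.sum_ite_mem, Finset.sum_ite_mem,
      Finset.univ_inter, Finset.univ_inter]
  -- value of `p cstar`
  have hcval : ∀ w : ℝ × (Fin n → ℝ), p cstar w
      = (∑ i ∈ BO, (gs i * w.2 i + bs i * (Q i ⬝ᵥ w.2 + w.1 * y i)))
        + ∑ i ∈ BI, (gs i * w.2 i + (bs i - d i) * (Q i ⬝ᵥ w.2 + w.1 * y i)) := by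
    intro w
    rw [hp]; simp only [hcstar]
    rw [Finset.sum_add_distrib, Finset.sum_add_distrib]
    have he1 := e1 w.2
    have he2' := e2 (Q *ᵥ w.2 + w.1 • y)
    simp only [Pi.add_apply, Pi.smul_apply, smul_eq_mul, hmv] at he2'
    have hbv : bflat ⬝ᵥ (Q *ᵥ w.2 + w.1 • y)
        = bflat ⬝ᵥ (Q *ᵥ w.2) + w.1 * (bflat ⬝ᵥ y) := by
      rw [dotProduct_add, dotProduct_smul]; simp [smul_eq_mul]
    rw [add_dotProduct, ← Matrix.dotProduct_mulVec]
    linear_combination he1 + he2' - hbv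
  -- Variational inequality from minimality
  have hVI : ∀ z : ℝ × (Fin n → ℝ), (∀ j, p (a j) z ≤ β j) → p cstar zstar ≤ p cstar z := by
    intro z hz
    obtain ⟨_, fBO, fBI, fM, fO, fI, fyz⟩ := hfeas_of_sat z hz
    set u : Fin n → ℝ := z.2 - bs with hu
    set av : ℝ := z.1 - b0s with hav
    set hv : Fin n → ℝ := Q *ᵥ u + av • y with hhv
    have hvap : ∀ i, hv i = Q i ⬝ᵥ u + av * y i := by
      intro i; rw [hhv]; simp [hmv]
    have huap : ∀ i, u i = z.2 i - bs i := by intro i; rw [hu]; simp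
    have hgz : ∀ i, gs i + hv i = (Q *ᵥ z.2 + z.1 • y) i := by
      intro i
      rw [hvap, hgs, hu, hav]
      simp only [Pi.add_apply, Pi.smul_apply, smul_eq_mul, hmv, dotProduct_sub]
      ring
    set L : ℝ := (∑ i ∈ BO, (gs i * u i + bs i * hv i))
      + ∑ i ∈ BI, (gs i * u i + (bs i - d i) * hv i) with hLdef
    set S : ℝ := (∑ i ∈ BO, hv i * u i) + ∑ i ∈ BI, hv i * u i with hSdef
    have hseg : ∀ t : ℝ, 0 < t → t ≤ 1 →
        FeasQP Q y d M' O' I' BO BI (b0s + t * av) (bs + t • u) (gs + t • hv) := by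
      intro t ht0 ht1
      refine ⟨?_, ?_, ?_, ?_, ?_, ?_, ?_⟩
      · funext i
        simp only [Pi.add_apply, Pi.smul_apply, smul_eq_mul, hmv, hvap, hgs,
          dotProduct_add, dotProduct_smul]
        ring
      · intro i hi
        have h1 := (hBO i hi).1
        have h2 := (hBO i hi).2
        have h3 := (fBO i hi).1
        have h4 := (fBO i hi).2
        rw [← hgz] at h3
        constructor
        · simp only [Pi.add_apply, Pi.smul_apply, smul_eq_mul]
          nlinarith
        · simp only [Pi.add_apply, Pi.smul_apply, smul_eq_mul, huap]
          nlinarith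
      · intro i hi
        have h1 := (hBI i hi).1
        have h2 := (hBI i hi).2
        have h3 := (fBI i hi).1
        have h4 := (fBI i hi).2
        rw [← hgz] at h3
        constructor
        · simp only [Pi.add_apply, Pi.smul_apply, smul_eq_mul]
          nlinarith
        · simp only [Pi.add_apply, Pi.smul_apply, smul_eq_mul, huap]
          nlinarith
      · intro i hi
        have h1 := hM i hi
        have h3 := fM i hi
        rw [← hgz] at h3
        simp only [Pi.add_apply, Pi.smul_apply, smul_eq_mul]
        rw [h1] at h3 ⊢
        rw [show hv i = 0 by linarith]
        ring
      · intro i hi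
        have h1 := hO i hi
        have h3 := fO i hi
        simp only [Pi.add_apply, Pi.smul_apply, smul_eq_mul, huap]
        rw [h1, h3]; ring
      · intro i hi
        have h1 := hI i hi
        have h3 := fI i hi
        simp only [Pi.add_apply, Pi.smul_apply, smul_eq_mul, huap]
        rw [h1, h3]; ring
      · rw [dotProduct_add, dotProduct_smul, hu, dotProduct_sub, hyb, fyz]
        simp
    have hJexp : ∀ t : ℝ, Jobj d BO BI (bs + t • u) (gs + t • hv)
        = Jobj d BO BI bs gs + t * L + t ^ 2 * S := by
      intro t
      simp only [Jobj, Pi.add_apply, Pi.smul_apply, smul_eq_mul]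
      have EA : ∑ i ∈ BO, (gs i + t * hv i) * (bs i + t * u i)
          = ∑ i ∈ BO, gs i * bs i + t * (∑ i ∈ BO, (gs i * u i + bs i * hv i))
            + t ^ 2 * ∑ i ∈ BO, hv i * u i := by
        rw [Finset.mul_sum, Finset.mul_sum, ← Finset.sum_add_distrib, ← Finset.sum_add_distrib]
        exact Finset.sum_congr rfl fun i _ => by ring
      have EB : ∑ i ∈ BI, (gs i + t * hv i) * (bs i + t * u i - d i)
          = ∑ i ∈ BI, gs i * (bs i - d i) + t * (∑ i ∈ BI, (gs i * u i + (bs i - d i) * hv i))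
            + t ^ 2 * ∑ i ∈ BI, hv i * u i := by
        rw [Finset.mul_sum, Finset.mul_sum, ← Finset.sum_add_distrib, ← Finset.sum_add_distrib]
        exact Finset.sum_congr rfl fun i _ => by ring
      rw [EA, EB, hLdef, hSdef]
      ring
    have h0L : 0 ≤ L := by
      apply nonneg_of_small_t L S
      intro t ht0 ht1
      have := hmin _ _ _ (hseg t ht0 ht1)
      rw [hJexp t] at this
      linarith
    have hL' : p cstar (z - zstar) = L := by
      rw [hcval, hLdef]
      simp only [Prod.snd_sub, Prod.fst_sub, hzstar]
      congr 1 <;> refine Finset.sum_congr rfl fun i _ => ?_ <;>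
        rw [hvap, huap, hav, hu] <;> simp [hmv] <;> ring
    have := map_sub (p cstar) z zstar
    rw [hL'] at this
    linarith
  -- apply affine Farkas
  have hmain : ∀ x, (∀ j, p (a j) x ≤ β j) → p (-cstar) x ≤ p (-cstar) zstar := by
    intro x hx
    have := hVI x hx
    simp only [map_neg, LinearMap.neg_apply]
    linarith
  obtain ⟨l, hl0, heq, hsum⟩ :=
    farkas_affine p hpzero hppos a β (-cstar) (p (-cstar) zstar) zstar hsatstar hmain
  have hpair : ∀ T : ℝ × (Fin n → ℝ), p (-cstar) T = ∑ j, l j * p (a j) T := by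
    intro T
    rw [heq, map_sum, LinearMap.sum_apply]
    apply Finset.sum_congr rfl
    intro j _
    rw [_root_.map_smul, LinearMap.smul_apply, smul_eq_mul]
  -- complementary slackness
  have hslack0 : ∀ j, l j * (β j - p (a j) zstar) = 0 := by
    have hps : ∑ j, l j * p (a j) zstar = p (-cstar) zstar := (hpair zstar).symm
    have hsum0 : ∑ j, l j * (β j - p (a j) zstar) ≤ 0 := by
      have hE : ∑ j, l j * (β j - p (a j) zstar)
          = ∑ j, l j * β j - ∑ j, l j * p (a j) zstar := by
        rw [← Finset.sum_sub_distrib]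
        apply Finset.sum_congr rfl; intro j _; ring
      rw [hE, hps]; linarith
    have hnn : ∀ j ∈ Finset.univ, 0 ≤ l j * (β j - p (a j) zstar) :=
      fun j _ => mul_nonneg (hl0 j) (by linarith [hsatstar j])
    intro j
    exact (Finset.sum_eq_zero_iff_of_nonneg hnn).mp
      (le_antisymm hsum0 (Finset.sum_nonneg hnn)) j (Finset.mem_univ j)
  -- aggregated multipliers
  set ν : Fin n → ℝ := fun i =>
    (if i ∈ BO ∪ M' then -l (.inr (.inl (i, false))) else 0) + (if i ∈ BI ∪ M' then l (.inr (.inl (i, true))) else 0) with hν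
  set m : Fin n → ℝ := fun i =>
    (if i ∈ BO ∪ O' ∪ I' then -l (.inl (i, false)) else 0) + (if i ∈ BI ∪ O' ∪ I' then l (.inl (i, true)) else 0) with hm
  set w : Fin n → ℝ := bflat + ν with hw
  -- splitting sums over the index type
  have hsplit : ∀ F : (Fin n × Bool) ⊕ (Fin n × Bool) ⊕ Bool → ℝ,
      ∑ j, F j = ((((∑ i, F (.inl (i, false))) + (∑ i, F (.inl (i, true))))
        + ((∑ i, F (.inr (.inl (i, false)))) + (∑ i, F (.inr (.inl (i, true))))))
        + (F (.inr (.inr false)) + F (.inr (.inr true)))) := by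
    intro F
    rw [Fintype.sum_sum_type, Fintype.sum_sum_type, Fintype.sum_prod_type,
      Fintype.sum_prod_type, Fintype.sum_bool]
    simp only [Fintype.sum_bool]
    rw [Finset.sum_add_distrib, Finset.sum_add_distrib]
    ring
  -- slack values we need
  have hslack_bl : ∀ i ∈ BO, l (.inl (i, false)) * bs i = 0 := by
    intro i hi
    have hmem : i ∈ BO ∪ O' ∪ I' :=
      Finset.mem_union_left _ (Finset.mem_union_left _ hi)
    have := hslack0 (.inl (i, false))
    rw [pA1, if_pos hmem] at this
    simp only [hβ, hzstar] at this
    rw [if_neg (hd8 i hi)] at this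
    linarith [this]
  have hslack_bu : ∀ i ∈ BI, l (.inl (i, true)) * (d i - bs i) = 0 := by
    intro i hi
    have hmem : i ∈ BI ∪ O' ∪ I' :=
      Finset.mem_union_left _ (Finset.mem_union_left _ hi)
    have := hslack0 (.inl (i, true))
    rw [pA2, if_pos hmem] at this
    simp only [hβ, hzstar] at this
    rw [if_pos hmem, if_neg (hd7 i hi)] at this
    linarith [this]
  have hslack_gl : ∀ i ∈ BO, l (.inr (.inl (i, false))) * gs i = 0 := by
    intro i hi
    have hmem : i ∈ BO ∪ M' := Finset.mem_union_left _ hi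
    have := hslack0 (.inr (.inl (i, false)))
    rw [pA3, if_pos hmem] at this
    simp only [hβ, hzstar] at this
    have hv : y i * b0s + Q i ⬝ᵥ bs = gs i := by rw [hgs]; ring
    rw [hv] at this
    linarith [this]
  have hslack_gu : ∀ i ∈ BI, l (.inr (.inl (i, true))) * gs i = 0 := by
    intro i hi
    have hmem : i ∈ BI ∪ M' := Finset.mem_union_left _ hi
    have := hslack0 (.inr (.inl (i, true)))
    rw [pA4, if_pos hmem] at this
    simp only [hβ, hzstar] at this
    have hv : y i * b0s + Q i ⬝ᵥ bs = gs i := by rw [hgs]; ring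
    rw [hv] at this
    linarith [this]
  -- dot products against ν and m
  have hνv : ∀ v : Fin n → ℝ, ν ⬝ᵥ v
      = (∑ i, l (.inr (.inl (i, false))) * (if i ∈ BO ∪ M' then -(v i) else 0))
        + ∑ i, l (.inr (.inl (i, true))) * (if i ∈ BI ∪ M' then v i else 0) := by
    intro v
    simp only [dotProduct, hν, add_mul, ite_mul, zero_mul, neg_mul, mul_ite, mul_zero, mul_neg]
    rw [Finset.sum_add_distrib]
  have hmv' : ∀ v : Fin n → ℝ, (∑ i, m i * v i)
      = (∑ i, l (.inl (i, false)) * (if i ∈ BO ∪ O' ∪ I' then -(v i) else 0))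
        + ∑ i, l (.inl (i, true)) * (if i ∈ BI ∪ O' ∪ I' then v i else 0) := by
    intro v
    simp only [hm, add_mul, ite_mul, zero_mul, neg_mul, mul_ite, mul_zero, mul_neg]
    rw [Finset.sum_add_distrib]
  -- first test vector: (1, 0)
  have hE1 : -(bflat ⬝ᵥ y) = ν ⬝ᵥ y := by
    have h := hpair ((1 : ℝ), (0 : Fin n → ℝ))
    rw [hsplit] at h
    have hq1 : ∑ i, l (.inl (i, false)) * p (a (.inl (i, false))) ((1 : ℝ), (0 : Fin n → ℝ)) = 0 :=
      Finset.sum_eq_zero fun i _ => by rw [pA1]; split_ifs <;> simp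
    have hq2 : ∑ i, l (.inl (i, true)) * p (a (.inl (i, true))) ((1 : ℝ), (0 : Fin n → ℝ)) = 0 :=
      Finset.sum_eq_zero fun i _ => by rw [pA2]; split_ifs <;> simp
    have hq3 : ∑ i, l (.inr (.inl (i, false)))
        * p (a (.inr (.inl (i, false)))) ((1 : ℝ), (0 : Fin n → ℝ))
        = ∑ i, l (.inr (.inl (i, false))) * (if i ∈ BO ∪ M' then -(y i) else 0) :=
      Finset.sum_congr rfl fun i _ => by rw [pA3]; split_ifs <;> simp
    have hq4 : ∑ i, l (.inr (.inl (i, true)))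
        * p (a (.inr (.inl (i, true)))) ((1 : ℝ), (0 : Fin n → ℝ))
        = ∑ i, l (.inr (.inl (i, true))) * (if i ∈ BI ∪ M' then y i else 0) :=
      Finset.sum_congr rfl fun i _ => by rw [pA4]; split_ifs <;> simp
    rw [hq1, hq2, hq3, hq4, pA5, pA6] at h
    have hlhs : p (-cstar) ((1 : ℝ), (0 : Fin n → ℝ)) = -(bflat ⬝ᵥ y) := by
      rw [map_neg, LinearMap.neg_apply, hp]
      simp [hcstar]
    rw [hlhs] at h
    rw [hνv y]
    simp only [dotProduct_zero, mul_zero, neg_zero] at h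
    linarith [h]
  have hyw : y ⬝ᵥ w = 0 := by
    rw [hw, dotProduct_add, dotProduct_comm y bflat, dotProduct_comm y ν]
    linarith [hE1]
  -- second test vector: (0, w)
  have hE2 : -(gB ⬝ᵥ w + (bflat ᵥ* Q) ⬝ᵥ w)
      = (∑ i, m i * w i) + ν ⬝ᵥ (Q *ᵥ w) := by
    have h := hpair ((0 : ℝ), w)
    rw [hsplit] at h
    have hq1 : ∑ i, l (.inl (i, false)) * p (a (.inl (i, false))) ((0 : ℝ), w)
        = ∑ i, l (.inl (i, false)) * (if i ∈ BO ∪ O' ∪ I' then -(w i) else 0) :=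
      Finset.sum_congr rfl fun i _ => by rw [pA1]
    have hq2 : ∑ i, l (.inl (i, true)) * p (a (.inl (i, true))) ((0 : ℝ), w)
        = ∑ i, l (.inl (i, true)) * (if i ∈ BI ∪ O' ∪ I' then w i else 0) :=
      Finset.sum_congr rfl fun i _ => by rw [pA2]
    have hq3 : ∑ i, l (.inr (.inl (i, false))) * p (a (.inr (.inl (i, false)))) ((0 : ℝ), w)
        = ∑ i, l (.inr (.inl (i, false))) * (if i ∈ BO ∪ M' then -((Q *ᵥ w) i) else 0) :=
      Finset.sum_congr rfl fun i _ => by rw [pA3]; split_ifs <;> simp [hmv]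
    have hq4 : ∑ i, l (.inr (.inl (i, true))) * p (a (.inr (.inl (i, true)))) ((0 : ℝ), w)
        = ∑ i, l (.inr (.inl (i, true))) * (if i ∈ BI ∪ M' then (Q *ᵥ w) i else 0) :=
      Finset.sum_congr rfl fun i _ => by rw [pA4]; split_ifs <;> simp [hmv]
    rw [hq1, hq2, hq3, hq4, pA5, pA6] at h
    have hlhs : p (-cstar) ((0 : ℝ), w) = -(gB ⬝ᵥ w + (bflat ᵥ* Q) ⬝ᵥ w) := by
      rw [map_neg, LinearMap.neg_apply, hp]
      simp [hcstar, add_dotProduct]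
    rw [hlhs] at h
    rw [hmv' w, hνv (Q *ᵥ w)]
    simp only at h
    rw [hyw] at h
    linarith [h]
  -- assembling the pieces
  have hquad : (bflat ᵥ* Q) ⬝ᵥ w + ν ⬝ᵥ (Q *ᵥ w) = w ⬝ᵥ (Q *ᵥ w) := by
    rw [← Matrix.dotProduct_mulVec, hw, add_dotProduct]
  have hgBw : gB ⬝ᵥ w = Jobj d BO BI bs gs := by
    have hterm : ∀ i, gB i * w i
        = (if i ∈ BO then gs i * bs i else 0) + (if i ∈ BI then gs i * (bs i - d i) else 0) := by
      intro i
      simp only [hgB, hw, hbflat, hν, Pi.add_apply]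
      by_cases hiBO : i ∈ BO
      · have hn1 : i ∉ BI := hd10 i hiBO
        have hn2 : i ∉ M' := hd3 i hiBO
        have hcs := hslack_gl i hiBO
        simp only [Finset.mem_union, hiBO, hn1, hn2, ite_true, ite_false, or_false, false_or,
          if_true, if_false]
        linear_combination -hcs
      · by_cases hiBI : i ∈ BI
        · have hn2 : i ∉ M' := hd4 i hiBI
          have hcs := hslack_gu i hiBI
          simp only [Finset.mem_union, hiBO, hiBI, hn2, ite_true, ite_false, or_false, false_or,
            if_true, if_false]
          linear_combination hcs
        · simp [hiBO, hiBI]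
    calc gB ⬝ᵥ w = ∑ i, ((if i ∈ BO then gs i * bs i else 0)
          + (if i ∈ BI then gs i * (bs i - d i) else 0)) :=
        Finset.sum_congr rfl fun i _ => hterm i
      _ = Jobj d BO BI bs gs := by
        rw [Finset.sum_add_distrib, Finset.sum_ite_mem, Finset.sum_ite_mem,
          Finset.univ_inter, Finset.univ_inter, Jobj]
  have hmw : ∀ i, 0 ≤ m i * w i := by
    intro i
    have hcov : i ∈ M' ∨ i ∈ O' ∨ i ∈ I' ∨ i ∈ BO ∨ i ∈ BI := by
      have hi := Finset.mem_univ i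
      rw [← hcover] at hi
      simpa [Finset.mem_union, or_assoc] using hi
    simp only [hm, hw, hbflat, hν, Pi.add_apply]
    rcases hcov with hi | hi | hi | hi | hi
    · have e1' : i ∉ BO := Finset.disjoint_left.mp h3 hi
      have e2' : i ∉ O' := Finset.disjoint_left.mp h1 hi
      have e3' : i ∉ I' := Finset.disjoint_left.mp h2 hi
      have e4' : i ∉ BI := Finset.disjoint_left.mp h4 hi
      simp [e1', e2', e3', e4']
    · have e1' : i ∉ BO := Finset.disjoint_left.mp h6 hi
      have e2' : i ∉ BI := Finset.disjoint_left.mp h7 hi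
      have e3' : i ∉ M' := Finset.disjoint_right.mp h1 hi
      simp [e1', e2', e3', hi]
    · have e1' : i ∉ BO := Finset.disjoint_left.mp h8 hi
      have e2' : i ∉ BI := Finset.disjoint_left.mp h9 hi
      have e3' : i ∉ M' := Finset.disjoint_right.mp h2 hi
      simp [e1', e2', e3', hi]
    · have e1' : i ∉ BI := hd10 i hi
      have e2' : i ∉ O' := hd6 i hi
      have e3' : i ∉ I' := hd8 i hi
      have e4' : i ∉ M' := hd3 i hi
      simp [hi, e1', e2', e3', e4']
      nlinarith [hslack_bl i hi,
        mul_nonneg (hl0 (.inl (i, false))) (hl0 (.inr (.inl (i, false))))]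
    · have e1' : i ∉ BO := fun h' => hd10 i h' hi
      have e2' : i ∉ O' := hd7 i hi
      have e3' : i ∉ I' := hd9 i hi
      have e4' : i ∉ M' := hd4 i hi
      simp [hi, e1', e2', e3', e4']
      nlinarith [hslack_bu i hi,
        mul_nonneg (hl0 (.inl (i, true))) (hl0 (.inr (.inl (i, true))))]
  have hsum_mw : 0 ≤ ∑ i, m i * w i := Finset.sum_nonneg fun i _ => hmw i
  have hpsdw : 0 ≤ w ⬝ᵥ (Q *ᵥ w) := hQpsd w
  have hJle : Jobj d BO BI bs gs ≤ 0 := by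
    have := hE2
    rw [hgBw] at this
    linarith [hquad]
  -- nonnegativity of the objective, termwise
  have htermBO : ∀ i ∈ BO, 0 ≤ gs i * bs i :=
    fun i hi => mul_nonneg (hBO i hi).1 (hBO i hi).2
  have htermBI : ∀ i ∈ BI, 0 ≤ gs i * (bs i - d i) := by
    intro i hi
    have := (hBI i hi).1
    have := (hBI i hi).2
    nlinarith
  have hJge : 0 ≤ Jobj d BO BI bs gs := by
    rw [Jobj]
    have := Finset.sum_nonneg htermBO
    have := Finset.sum_nonneg htermBI
    linarith
  have hJ0 : Jobj d BO BI bs gs = 0 := le_antisymm hJle hJge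
  refine ⟨hJ0, ?_, ?_⟩
  · intro i hi
    have hBO0 : ∑ i ∈ BO, gs i * bs i = 0 := by
      have h1' := Finset.sum_nonneg htermBO
      have h2' := Finset.sum_nonneg htermBI
      rw [Jobj] at hJ0
      linarith
    exact (Finset.sum_eq_zero_iff_of_nonneg htermBO).mp hBO0 i hi
  · intro i hi
    have hBI0 : ∑ i ∈ BI, gs i * (bs i - d i) = 0 := by
      have h1' := Finset.sum_nonneg htermBO
      have h2' := Finset.sum_nonneg htermBI
      rw [Jobj] at hJ0
      linarith
    exact (Finset.sum_eq_zero_iff_of_nonneg htermBI).mp hBI0 i hi
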